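/- Let m > 0, let O, v_O, ω : ℝ → ℝ³ be differentiable with O'(t) = v_O(t), and define the total generalized potential U(t,x,v) = m v_O(t) · v + m (ω(t) × (x − O(t))) · v + m v_O(t) · (ω(t) × (x − O(t))) + (m/2) ‖ω(t) × (x − O(t))‖² on ℝ × ℝ³ × ℝ³. Then for every twice differentiable curve x : ℝ → ℝ³ and every t ∈ ℝ, ∇_x U(t, x(t), ẋ(t)) − d/dt [∇_v U(t, x(t), ẋ(t))] = −m [ v_O'(t) + ω'(t) × (x(t) − O(t)) + ω(t) × (ω(t) × (x(t) − O(t))) ] − 2m ω(t) × ẋ(t); that is, the Euler–Lagrange generalized force of U is exactly the sum of the dragging force −m a_τ and the Coriolis force −2m ω × ẋ. -/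

import Mathlib

noncomputable section
open scoped RealInnerProductSpace

/-- Euclidean 3-space. -/
abbrev E3 : Type := EuclideanSpace ℝ (Fin 3)

/-- Constructor for vectors in `E3` from three coordinates. -/
def vec3 (a b c : ℝ) : E3 := (WithLp.equiv 2 (Fin 3 → ℝ)).symm ![a, b, c]

/-- The cross product on `E3`. -/
def cross3 (a b : E3) : E3 :=
  vec3 (a 1 * b 2 - a 2 * b 1) (a 2 * b 0 - a 0 * b 2) (a 0 * b 1 - a 1 * b 0)

/-- `pderiv3 F j x i` is the partial derivative `∂_j F_i` at `x`. -/
def pderiv3 (F : E3 → E3) (j : Fin 3) (x : E3) (i : Fin 3) : ℝ :=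
  fderiv ℝ F x (EuclideanSpace.single j 1) i

/-- The curl `∇ × F` of a vector field on `E3`:
`(∇×F)_1 = ∂_2 F_3 − ∂_3 F_2`, `(∇×F)_2 = ∂_3 F_1 − ∂_1 F_3`, `(∇×F)_3 = ∂_1 F_2 − ∂_2 F_1`
(written here with 0-based indices). -/
def curl3 (F : E3 → E3) (x : E3) : E3 :=
  vec3 (pderiv3 F 1 x 2 - pderiv3 F 2 x 1)
       (pderiv3 F 2 x 0 - pderiv3 F 0 x 2)
       (pderiv3 F 0 x 1 - pderiv3 F 1 x 0)

/-- The divergence `∇ · F = ∂_1 F_1 + ∂_2 F_2 + ∂_3 F_3` of a vector field on `E3`. -/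
def div3 (F : E3 → E3) (x : E3) : ℝ :=
  pderiv3 F 0 x 0 + pderiv3 F 1 x 1 + pderiv3 F 2 x 2

lemma vec3_apply0 (a b c : ℝ) : vec3 a b c 0 = a := rfl
lemma vec3_apply1 (a b c : ℝ) : vec3 a b c 1 = b := rfl
lemma vec3_apply2 (a b c : ℝ) : vec3 a b c 2 = c := rfl

lemma inner_E3 (a b : E3) : ⟪a, b⟫ = a 0 * b 0 + a 1 * b 1 + a 2 * b 2 := by
  simp [PiLp.inner_apply, Fin.sum_univ_three, mul_comm]

example (a b : E3) : cross3 a b 0 = a 1 * b 2 - a 2 * b 1 := rfl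

lemma E3_ext {a b : E3} (h0 : a 0 = b 0) (h1 : a 1 = b 1) (h2 : a 2 = b 2) : a = b := by
  ext i; fin_cases i <;> assumption

/-- cross3 with first argument fixed, as a linear map. -/
def crossLM (a : E3) : E3 →ₗ[ℝ] E3 where
  toFun := cross3 a
  map_add' u v := by
    apply E3_ext <;> simp [cross3, vec3_apply0, vec3_apply1, vec3_apply2] <;> ring
  map_smul' c u := by
    apply E3_ext <;>
      simp [cross3, vec3_apply0, vec3_apply1, vec3_apply2, PiLp.smul_apply, smul_eq_mul] <;> ring

def crossL (a : E3) : E3 →L[ℝ] E3 := (crossLM a).toContinuousLinearMap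

@[simp] lemma crossL_apply (a b : E3) : crossL a b = cross3 a b := rfl

/-- cross3 bundled as CLM in both arguments. -/
def crossL2 : E3 →L[ℝ] E3 →L[ℝ] E3 :=
  LinearMap.toContinuousLinearMap
  { toFun := crossL
    map_add' := fun u v => by
      apply ContinuousLinearMap.ext; intro w
      apply E3_ext <;> simp [cross3, vec3_apply0, vec3_apply1, vec3_apply2] <;> ring
    map_smul' := fun c u => by
      apply ContinuousLinearMap.ext; intro w
      apply E3_ext <;>
        simp [cross3, vec3_apply0, vec3_apply1, vec3_apply2, smul_eq_mul] <;> ring }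

@[simp] lemma crossL2_apply (a b : E3) : crossL2 a b = cross3 a b := rfl

/-- scalar triple product rotation: (a×b)·c = b·(c×a) i.e. ⟪a×b,c⟫ = ⟪c×a,b⟫ -/
lemma triple_rot (a b c : E3) : ⟪cross3 a b, c⟫ = ⟪cross3 c a, b⟫ := by
  rw [inner_E3, inner_E3]
  simp only [cross3, vec3_apply0, vec3_apply1, vec3_apply2]; ring

lemma cross3_antisymm (a b : E3) : cross3 a b = - cross3 b a := by
  apply E3_ext <;> simp [cross3, vec3_apply0, vec3_apply1, vec3_apply2] <;> ring

lemma hasGradientAt_affine (a : E3) (c : ℝ) (p : E3) :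
    HasGradientAt (fun w : E3 => ⟪a, w⟫ + c) a p := by
  rw [hasGradientAt_iff_hasFDerivAt]
  have h1 : HasFDerivAt (fun w : E3 => ⟪a, w⟫ + c) (innerSL ℝ a) p := by
    have := (innerSL ℝ a).hasFDerivAt (x := p)
    exact (this.add_const c).congr_fderiv rfl
  have h2 : (InnerProductSpace.toDual ℝ E3) a = innerSL ℝ a := by
    apply ContinuousLinearMap.ext; intro w
    simp [InnerProductSpace.toDual_apply_apply]
  rw [h2]; exact h1

lemma grad_x (m : ℝ) (w vOt Ot v p : E3) :
    HasGradientAt (fun y : E3 => m * ⟪vOt, v⟫ + m * ⟪cross3 w (y - Ot), v⟫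
        + m * ⟪vOt, cross3 w (y - Ot)⟫ + (m / 2) * ‖cross3 w (y - Ot)‖ ^ 2)
      (m • cross3 v w + m • cross3 vOt w + m • cross3 (cross3 w (p - Ot)) w) p := by
  set L : E3 →L[ℝ] E3 := crossL w with hL
  set b : E3 := m • cross3 v w + m • cross3 vOt w with hb
  set d : E3 := cross3 w Ot with hd
  set c₀ : ℝ := m * ⟪vOt, v⟫ - m * ⟪d, v⟫ - m * ⟪cross3 vOt w, Ot⟫ with hc₀
  have hfun : (fun y : E3 => m * ⟪vOt, v⟫ + m * ⟪cross3 w (y - Ot), v⟫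
        + m * ⟪vOt, cross3 w (y - Ot)⟫ + (m / 2) * ‖cross3 w (y - Ot)‖ ^ 2)
      = fun y => (⟪b, y⟫ + (m / 2) * ⟪L y - d, L y - d⟫) + c₀ := by
    funext y
    rw [← real_inner_self_eq_norm_sq]
    simp only [hb, hd, hc₀, hL, crossL_apply, inner_E3, cross3, vec3_apply0, vec3_apply1,
      vec3_apply2, PiLp.sub_apply, PiLp.add_apply, PiLp.smul_apply, smul_eq_mul]
    ring
  rw [hasGradientAt_iff_hasFDerivAt, hfun]
  have hg : HasFDerivAt (fun y : E3 => L y - d) L p := L.hasFDerivAt.sub_const d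
  have hq := hg.inner ℝ hg
  have hb1 : HasFDerivAt (fun y : E3 => ⟪b, y⟫) (innerSL ℝ b) p := by
    have h2 : ⇑(innerSL ℝ b) = fun y : E3 => ⟪b, y⟫ := coe_innerSL_apply (𝕜 := ℝ) b
    simpa [h2] using (innerSL ℝ b).hasFDerivAt (x := p)
  have hD := (hb1.add (hq.const_mul (m / 2))).add_const c₀
  have key : (InnerProductSpace.toDual ℝ E3)
      (m • cross3 v w + m • cross3 vOt w + m • cross3 (cross3 w (p - Ot)) w)
      = innerSL ℝ b + (m / 2) •
          ((fderivInnerCLM ℝ ((fun y : E3 => L y - d) p, (fun y : E3 => L y - d) p)).comp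
            (L.prod L)) := by
    apply ContinuousLinearMap.ext; intro h
    simp only [InnerProductSpace.toDual_apply_apply, ContinuousLinearMap.add_apply,
      ContinuousLinearMap.coe_smul', Pi.smul_apply, ContinuousLinearMap.coe_comp',
      Function.comp_apply, ContinuousLinearMap.prod_apply, fderivInnerCLM_apply,
      innerSL_apply_apply, smul_eq_mul, hL, crossL_apply, hb, hd]
    simp only [inner_E3, cross3, vec3_apply0, vec3_apply1, vec3_apply2, PiLp.sub_apply,
      PiLp.add_apply, PiLp.smul_apply, smul_eq_mul]
    ring
  rw [key]; exact hD

lemma hasDerivAt_cross3 {f g : ℝ → E3} {f' g' : E3} {s : ℝ}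
    (hf : HasDerivAt f f' s) (hg : HasDerivAt g g' s) :
    HasDerivAt (fun s => cross3 (f s) (g s)) (cross3 f' (g s) + cross3 (f s) g') s := by
  have hc : HasDerivAt (fun s => crossL2 (f s)) (crossL2 f') s :=
    crossL2.hasFDerivAt.comp_hasDerivAt s hf
  simpa using hc.clm_apply hg


/-- The total generalized potential
`U(t,x,v) = m v_O · v + m (ω × (x − O)) · v + m v_O · (ω × (x − O)) + (m/2)‖ω × (x − O)‖²`
produces, via the Euler–Lagrange combination `∇ₓU − d/dt(∇ᵥU)` along any twice
differentiable curve, exactly the sum of the dragging force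
`−m [a_O + ω' × (x − O) + ω × (ω × (x − O))]` and the Coriolis force `−2m ω × ẋ`. -/
theorem EL_force_of_total_generalized_potential (m : ℝ) (hm : 0 < m) (O vO ω : ℝ → E3)
    (hO : Differentiable ℝ O) (hvO : Differentiable ℝ vO) (hω : Differentiable ℝ ω)
    (hO' : ∀ t, deriv O t = vO t)
    (U : ℝ → E3 → E3 → ℝ)
    (hU : ∀ t x v, U t x v = m * ⟪vO t, v⟫ + m * ⟪cross3 (ω t) (x - O t), v⟫
        + m * ⟪vO t, cross3 (ω t) (x - O t)⟫ + (m / 2) * ‖cross3 (ω t) (x - O t)‖ ^ 2)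
    (x : ℝ → E3) (hx : Differentiable ℝ x) (hx' : Differentiable ℝ (deriv x)) (t : ℝ) :
    gradient (fun y => U t y (deriv x t)) (x t)
        - deriv (fun s => gradient (fun w => U s (x s) w) (deriv x s)) t
      = -(m • (deriv vO t + cross3 (deriv ω t) (x t - O t)
            + cross3 (ω t) (cross3 (ω t) (x t - O t))))
        - (2 * m) • cross3 (ω t) (deriv x t) := by
  -- the v-gradient is affine, gradient = A s
  set A : ℝ → E3 := fun s => m • (vO s + cross3 (ω s) (x s - O s)) with hA
  have hgradv : ∀ s, gradient (fun w => U s (x s) w) (deriv x s) = A s := by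
    intro s
    have hfun : (fun w => U s (x s) w)
        = fun w => ⟪A s, w⟫ + (m * ⟪vO s, cross3 (ω s) (x s - O s)⟫
            + (m / 2) * ‖cross3 (ω s) (x s - O s)‖ ^ 2) := by
      funext w
      rw [hU]
      simp only [hA, inner_add_left, real_inner_smul_left]
      ring
    rw [hfun]
    exact (hasGradientAt_affine _ _ _).gradient
  -- the x-gradient
  have hgradx : gradient (fun y => U t y (deriv x t)) (x t)
      = m • cross3 (deriv x t) (ω t) + m • cross3 (vO t) (ω t)
        + m • cross3 (cross3 (ω t) (x t - O t)) (ω t) := by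
    have hfun : (fun y => U t y (deriv x t))
        = fun y => m * ⟪vO t, deriv x t⟫ + m * ⟪cross3 (ω t) (y - O t), deriv x t⟫
            + m * ⟪vO t, cross3 (ω t) (y - O t)⟫ + (m / 2) * ‖cross3 (ω t) (y - O t)‖ ^ 2 :=
      funext fun y => hU t y (deriv x t)
    rw [hfun]
    exact (grad_x m (ω t) (vO t) (O t) (deriv x t) (x t)).gradient
  -- the time derivative of A
  have hderivA : deriv A t = m • (deriv vO t + (cross3 (deriv ω t) (x t - O t)
      + cross3 (ω t) (deriv x t - vO t))) := by
    have h1 : HasDerivAt (fun s => x s - O s) (deriv x t - vO t) t := by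
      have := ((hx t).hasDerivAt).sub ((hO t).hasDerivAt)
      rwa [hO' t] at this
    have h2 := hasDerivAt_cross3 ((hω t).hasDerivAt) h1
    have h3 := (((hvO t).hasDerivAt).add h2).const_smul m
    exact h3.deriv
  have hgrads : (fun s => gradient (fun w => U s (x s) w) (deriv x s)) = A := funext hgradv
  rw [hgradx, hgrads, hderivA]
  apply E3_ext <;>
    simp only [cross3, vec3_apply0, vec3_apply1, vec3_apply2, PiLp.sub_apply, PiLp.add_apply,
      PiLp.smul_apply, PiLp.neg_apply, smul_eq_mul] <;> ring
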